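/- Let u : [0,1/2] → ℝ satisfy ∫_0^{1/2} u = ∫_0^{1/2} x u(x) dx = ∫_0^{1/2} x^2 u(x) dx = 0, and define f(x,y) = u(x) for x ∈ [0,1/2] and f(x,y) = u(x - 1/2) for x ∈ (1/2, 1]. Let T be a triangle whose vertices have first coordinates (0, 1/2, 1). Then ∫_T f(x,y) v(x,y) dxdy = 0 for every affine function v(x,y) = α + βx + γy. -/

import Mathlib

open MeasureTheory Set intervalIntegral

lemma mem_hull_triple {v₁ v₂ v₃ p : ℝ × ℝ}
    (hp : p ∈ convexHull ℝ {v₁, v₂, v₃}) :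
    ∃ a b c : ℝ, 0 ≤ a ∧ 0 ≤ b ∧ 0 ≤ c ∧ a + b + c = 1 ∧
      a • v₁ + b • v₂ + c • v₃ = p := by
  rw [show ({v₁, v₂, v₃} : Set (ℝ×ℝ)) = insert v₁ {v₂, v₃} from rfl,
    convexHull_insert ⟨v₂, by simp⟩, mem_convexJoin] at hp
  obtain ⟨x, hx, w, hw, hpw⟩ := hp
  rw [Set.mem_singleton_iff] at hx
  subst hx
  rw [convexHull_pair] at hw
  obtain ⟨b', c', hb', hc', hbc', rfl⟩ := hw
  obtain ⟨a, t, ha, ht, hat, rfl⟩ := hpw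
  exact ⟨a, t * b', t * c', ha, by positivity, by positivity, by nlinarith,
    by rw [smul_add, smul_smul, smul_smul, add_assoc]⟩

lemma hull_triple_mem {v₁ v₂ v₃ : ℝ × ℝ} {a b c : ℝ}
    (ha : 0 ≤ a) (hb : 0 ≤ b) (hc : 0 ≤ c) (habc : a + b + c = 1) :
    a • v₁ + b • v₂ + c • v₃ ∈ convexHull ℝ {v₁, v₂, v₃} := by
  have h1 : v₁ ∈ convexHull ℝ ({v₁, v₂, v₃} : Set (ℝ×ℝ)) :=
    subset_convexHull ℝ _ (by simp)
  have h2 : v₂ ∈ convexHull ℝ ({v₁, v₂, v₃} : Set (ℝ×ℝ)) :=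
    subset_convexHull ℝ _ (by simp)
  have h3 : v₃ ∈ convexHull ℝ ({v₁, v₂, v₃} : Set (ℝ×ℝ)) :=
    subset_convexHull ℝ _ (by simp)
  rcases eq_or_lt_of_le (add_nonneg hb hc) with hbc | hbc
  · have hb0 : b = 0 := by linarith
    have hc0 : c = 0 := by linarith
    have ha1 : a = 1 := by linarith
    simp [hb0, hc0, ha1, h1]
  · have hw : (b/(b+c)) • v₂ + (c/(b+c)) • v₃ ∈ convexHull ℝ ({v₁, v₂, v₃} : Set (ℝ×ℝ)) :=
      convex_convexHull ℝ _ h2 h3 (div_nonneg hb hbc.le) (div_nonneg hc hbc.le)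
        (by field_simp)
    have := convex_convexHull ℝ ({v₁, v₂, v₃} : Set (ℝ×ℝ)) h1 hw ha
      (add_nonneg hb hc) (by linarith)
    rwa [smul_add, smul_smul, smul_smul, mul_div_cancel₀ _ hbc.ne',
      mul_div_cancel₀ _ hbc.ne', ← add_assoc] at this

lemma uIcc_combo {a b y : ℝ} (hy : y ∈ uIcc a b) :
    ∃ s t : ℝ, 0 ≤ s ∧ 0 ≤ t ∧ s + t = 1 ∧ s * a + t * b = y := by
  rw [← segment_eq_uIcc] at hy
  obtain ⟨s, t, hs, ht, hst, h⟩ := hy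
  exact ⟨s, t, hs, ht, hst, h⟩

lemma tri_eq (y₁ y₂ y₃ : ℝ) :
    convexHull ℝ {((0:ℝ), y₁), ((1/2 : ℝ), y₂), ((1:ℝ), y₃)} =
      {p : ℝ × ℝ | p.1 ∈ Icc (0:ℝ) 1 ∧ p.2 ∈ uIcc
        (if p.1 ≤ 1/2 then (1-2*p.1)*y₁ + 2*p.1*y₂ else (2-2*p.1)*y₂ + (2*p.1-1)*y₃)
        ((1-p.1)*y₁ + p.1*y₃)} := by
  ext p
  obtain ⟨x, y⟩ := p
  simp only [Set.mem_setOf_eq]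
  constructor
  · intro hp
    obtain ⟨a, b, c, ha, hb, hc, habc, hco⟩ := mem_hull_triple hp
    have hx : x = b/2 + c := by
      have := congrArg Prod.fst hco
      simp [Prod.fst_add] at this
      linarith
    have hy : y = a*y₁ + b*y₂ + c*y₃ := by
      have := congrArg Prod.snd hco
      simp [Prod.snd_add] at this
      linarith
    have ha' : a = 1 - b - c := by linarith
    refine ⟨Set.mem_Icc.2 ⟨by linarith, by linarith⟩, ?_⟩
    by_cases hx12 : x ≤ 1/2
    · rw [if_pos hx12]
      have k1 : y - ((1-2*x)*y₁ + 2*x*y₂) = c * (y₁ - 2*y₂ + y₃) := by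
        rw [hx, hy, ha']; ring
      have k2 : ((1-x)*y₁ + x*y₃) - y = (b/2) * (y₁ - 2*y₂ + y₃) := by
        rw [hx, hy, ha']; ring
      rcases le_or_gt 0 (y₁ - 2*y₂ + y₃) with hd | hd
      · exact Set.mem_uIcc.2 (Or.inl ⟨by nlinarith, by nlinarith⟩)
      · exact Set.mem_uIcc.2 (Or.inr ⟨by nlinarith, by nlinarith⟩)
    · rw [if_neg hx12]
      have k1 : y - ((2-2*x)*y₂ + (2*x-1)*y₃) = a * (y₁ - 2*y₂ + y₃) := by
        rw [hx, hy, ha']; ring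
      have k2 : ((1-x)*y₁ + x*y₃) - y = (b/2) * (y₁ - 2*y₂ + y₃) := by
        rw [hx, hy, ha']; ring
      rcases le_or_gt 0 (y₁ - 2*y₂ + y₃) with hd | hd
      · exact Set.mem_uIcc.2 (Or.inl ⟨by nlinarith, by nlinarith⟩)
      · exact Set.mem_uIcc.2 (Or.inr ⟨by nlinarith, by nlinarith⟩)
  · rintro ⟨⟨hx0, hx1⟩, hy⟩
    set A : ℝ := if x ≤ 1/2 then (1-2*x)*y₁ + 2*x*y₂ else (2-2*x)*y₂ + (2*x-1)*y₃ with hA'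
    have hA : (x, A)
        ∈ convexHull ℝ {((0:ℝ), y₁), ((1/2 : ℝ), y₂), ((1:ℝ), y₃)} := by
      by_cases hx12 : x ≤ 1/2
      · rw [hA', if_pos hx12]
        have := hull_triple_mem (v₁ := ((0:ℝ), y₁)) (v₂ := ((1/2:ℝ), y₂)) (v₃ := ((1:ℝ), y₃))
          (a := 1-2*x) (b := 2*x) (c := 0) (by linarith) (by linarith) le_rfl (by ring)
        convert this using 1
        ext <;> simp <;> ring
      · rw [hA', if_neg hx12]
        push_neg at hx12
        have := hull_triple_mem (v₁ := ((0:ℝ), y₁)) (v₂ := ((1/2:ℝ), y₂)) (v₃ := ((1:ℝ), y₃))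
          (a := 0) (b := 2-2*x) (c := 2*x-1) le_rfl (by linarith) (by linarith) (by ring)
        convert this using 1
        ext <;> simp <;> ring
    have hB : (x, (1-x)*y₁ + x*y₃)
        ∈ convexHull ℝ {((0:ℝ), y₁), ((1/2 : ℝ), y₂), ((1:ℝ), y₃)} := by
      have := hull_triple_mem (v₁ := ((0:ℝ), y₁)) (v₂ := ((1/2:ℝ), y₂)) (v₃ := ((1:ℝ), y₃))
        (a := 1-x) (b := 0) (c := x) (by linarith) le_rfl (by linarith) (by ring)
      convert this using 1
      ext <;> simp <;> ring
    obtain ⟨s, t, hs, ht, hst, hsty⟩ := uIcc_combo hy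
    have : (x, y) = s • (x, A)
        + t • (x, (1-x)*y₁ + x*y₃) := by
      ext
      · simp; nlinarith [hst]
      · simp; linarith [hsty]
    rw [this]
    exact convex_convexHull ℝ _ hA hB hs ht hst

lemma affine_slice (A B C D : ℝ) :
    ∫ y in C..D, (A + B * y) = (D - C) * A + B * (D^2 - C^2) / 2 := by
  rw [intervalIntegral.integral_add (intervalIntegrable_const)
      (Continuous.intervalIntegrable (by fun_prop : Continuous fun y : ℝ => B * y) _ _),
    intervalIntegral.integral_const, intervalIntegral.integral_const_mul, integral_id]
  simp [smul_eq_mul]; ring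

lemma ortho_quad (u : ℝ → ℝ)
    (hu_int : IntervalIntegrable u volume 0 (1/2))
    (h0 : (∫ x in (0:ℝ)..(1/2), u x) = 0)
    (h1 : (∫ x in (0:ℝ)..(1/2), x * u x) = 0)
    (h2 : (∫ x in (0:ℝ)..(1/2), x^2 * u x) = 0)
    (c₀ c₁ c₂ : ℝ) :
    ∫ x in (0:ℝ)..(1/2), u x * (c₀ + c₁ * x + c₂ * x^2) = 0 := by
  have e : ∀ x : ℝ, u x * (c₀ + c₁ * x + c₂ * x^2)
      = c₀ * u x + (c₁ * (x * u x) + c₂ * (x^2 * u x)) := fun x => by ring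
  have I1 : IntervalIntegrable (fun x => x * u x) volume 0 (1/2) :=
    hu_int.continuousOn_mul continuous_id.continuousOn
  have I2 : IntervalIntegrable (fun x => x^2 * u x) volume 0 (1/2) :=
    hu_int.continuousOn_mul (continuous_pow 2).continuousOn
  simp only [e]
  rw [intervalIntegral.integral_add (hu_int.const_mul c₀)
      ((I1.const_mul c₁).add (I2.const_mul c₂)),
    intervalIntegral.integral_add (I1.const_mul c₁) (I2.const_mul c₂),
    intervalIntegral.integral_const_mul, intervalIntegral.integral_const_mul,
    intervalIntegral.integral_const_mul, h0, h1, h2]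
  ring

/-- if `u` on `[0,1/2]` is orthogonal to `1, x, x²`, and
`f(x,y) = u(x)` for `x ∈ [0,1/2]`, `f(x,y) = u(x-1/2)` for `x ∈ (1/2,1]`,
then `∫_T f·v = 0` for every affine `v`, where `T` is a triangle whose
vertices have first coordinates `0, 1/2, 1`. -/
theorem orthogonality_on_triangle
    (u : ℝ → ℝ)
    (hu_int : IntervalIntegrable u volume 0 (1/2))
    (h0 : (∫ x in (0:ℝ)..(1/2), u x) = 0)
    (h1 : (∫ x in (0:ℝ)..(1/2), x * u x) = 0)
    (h2 : (∫ x in (0:ℝ)..(1/2), x^2 * u x) = 0)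
    (f : ℝ × ℝ → ℝ)
    (hf : ∀ p : ℝ × ℝ, f p = if p.1 ≤ 1/2 then u p.1 else u (p.1 - 1/2))
    (y₁ y₂ y₃ : ℝ)
    (T : Set (ℝ × ℝ))
    (hT : T = convexHull ℝ {((0:ℝ), y₁), ((1/2 : ℝ), y₂), ((1:ℝ), y₃)})
    (hT_nondeg : AffineIndependent ℝ ![((0:ℝ), y₁), ((1/2 : ℝ), y₂), ((1:ℝ), y₃)])
    (hfT : IntegrableOn f T volume)
    (α β γ : ℝ) :
    ∫ p in T, f p * (α + β * p.1 + γ * p.2) = 0 := by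
  set d : ℝ := y₁ - 2*y₂ + y₃ with hd
  set g : ℝ → ℝ := fun x => if x ≤ 1/2 then (1-2*x)*y₁ + 2*x*y₂ else (2-2*x)*y₂ + (2*x-1)*y₃
    with hgdef
  set ℓ : ℝ → ℝ := fun x => (1-x)*y₁ + x*y₃ with hldef
  set h : ℝ × ℝ → ℝ := fun p => f p * (α + β * p.1 + γ * p.2) with hhdef
  set q : ℝ → ℝ := fun x => ∫ y in (g x)..(ℓ x), h (x, y) with hqdef
  have hTS : T = {p : ℝ × ℝ | p.1 ∈ Icc (0:ℝ) 1 ∧ p.2 ∈ uIcc (g p.1) (ℓ p.1)} := by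
    rw [hT, tri_eq]
  -- basic facts
  have hTcomp : IsCompact T := by
    rw [hT]
    exact Set.Finite.isCompact_convexHull ℝ (by
      exact (Set.finite_singleton _).insert _ |>.insert _)
  have hTmeas : MeasurableSet T := hTcomp.isClosed.measurableSet
  have hvcont : Continuous fun p : ℝ × ℝ => α + β * p.1 + γ * p.2 := by continuity
  have hInt : IntegrableOn h T volume := hfT.mul_continuousOn hvcont.continuousOn hTcomp
  have hIndInt : Integrable (T.indicator h) volume := (integrable_indicator_iff hTmeas).2 hInt
  -- Fubini
  have step1 : (∫ p in T, h p) = ∫ x : ℝ, ∫ y : ℝ, T.indicator h (x, y) := by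
    rw [← MeasureTheory.integral_indicator hTmeas]
    rw [show (volume : Measure (ℝ × ℝ)) = (volume : Measure ℝ).prod volume from Measure.volume_eq_prod ℝ ℝ]
    exact integral_prod _ (by rwa [← Measure.volume_eq_prod])
  -- slices
  have slice : ∀ x : ℝ, (∫ y : ℝ, T.indicator h (x, y))
      = (Icc (0:ℝ) 1).indicator (fun x => ∫ y in uIcc (g x) (ℓ x), h (x, y)) x := by
    intro x
    by_cases hx : x ∈ Icc (0:ℝ) 1
    · rw [Set.indicator_of_mem hx, ← MeasureTheory.integral_indicator measurableSet_uIcc]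
      congr 1
      funext y
      by_cases hy : y ∈ uIcc (g x) (ℓ x)
      · rw [Set.indicator_of_mem hy,
          Set.indicator_of_mem (show (x, y) ∈ T by rw [hTS]; exact ⟨hx, hy⟩)]
      · rw [Set.indicator_of_notMem hy,
          Set.indicator_of_notMem (show (x, y) ∉ T by rw [hTS]; rintro ⟨-, h2'⟩; exact hy h2')]
    · rw [Set.indicator_of_notMem hx]
      have hz : ∀ y : ℝ, T.indicator h (x, y) = 0 := fun y =>
        Set.indicator_of_notMem (show (x, y) ∉ T by rw [hTS]; rintro ⟨h1', -⟩; exact hx h1') _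
      simp [hz]
  clear_value d g ℓ h q
  set σ : ℝ := if 0 ≤ d then 1 else -1 with hσ
  clear_value σ
  have huIcc : ∀ x ∈ Icc (0:ℝ) 1, (∫ y in uIcc (g x) (ℓ x), h (x, y)) = σ * q x := by
    rintro x ⟨hx0, hx1⟩
    have hdiff : ℓ x - g x = (if x ≤ 1/2 then x else 1 - x) * d := by
      by_cases hx12 : x ≤ 1/2
      · simp only [hgdef, hldef, if_pos hx12, hd]; ring
      · simp only [hgdef, hldef, if_neg hx12, hd]; ring
    have hfac : 0 ≤ (if x ≤ 1/2 then x else 1 - x) := by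
      by_cases hx12 : x ≤ 1/2
      · rw [if_pos hx12]; linarith
      · rw [if_neg hx12]; linarith
    by_cases hd0 : 0 ≤ d
    · have hgl : g x ≤ ℓ x := by linarith [hdiff, mul_nonneg hfac hd0]
      rw [hσ, if_pos hd0, one_mul, uIcc_of_le hgl, hqdef,
        integral_Icc_eq_integral_Ioc, ← intervalIntegral.integral_of_le hgl]
    · have hgl : ℓ x ≤ g x := by
        push_neg at hd0
        linarith [hdiff, mul_nonpos_of_nonneg_of_nonpos hfac hd0.le]
      rw [hσ, if_neg hd0, uIcc_of_ge hgl, integral_Icc_eq_integral_Ioc,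
        ← intervalIntegral.integral_of_le hgl, hqdef,
        intervalIntegral.integral_symm]
      ring
  have step2 : (∫ x : ℝ, (Icc (0:ℝ) 1).indicator (fun x => ∫ y in uIcc (g x) (ℓ x), h (x, y)) x)
      = σ * ∫ x in (0:ℝ)..1, q x := by
    rw [MeasureTheory.integral_indicator measurableSet_Icc,
      setIntegral_congr_fun measurableSet_Icc huIcc,
      integral_Icc_eq_integral_Ioc, ← intervalIntegral.integral_of_le (by norm_num : (0:ℝ) ≤ 1),
      intervalIntegral.integral_const_mul]
  -- the slice values
  have hq1 : ∀ x : ℝ, x ≤ 1/2 → q x =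
      u x * ((ℓ x - g x) * (α + β * x) + γ * ((ℓ x)^2 - (g x)^2) / 2) := by
    intro x hx12
    rw [hqdef]
    simp only
    rw [show (fun y => h (x, y)) = fun y => u x * ((α + β * x) + γ * y) by
      funext y
      rw [hhdef]
      simp only [hf]
      rw [if_pos hx12]]
    rw [intervalIntegral.integral_const_mul, affine_slice]
  have hq2 : ∀ x : ℝ, 1/2 < x → q x =
      u (x - 1/2) * ((ℓ x - g x) * (α + β * x) + γ * ((ℓ x)^2 - (g x)^2) / 2) := by
    intro x hx12
    rw [hqdef]
    simp only
    rw [show (fun y => h (x, y)) = fun y => u (x - 1/2) * ((α + β * x) + γ * y) by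
      funext y
      rw [hhdef]
      simp only [hf]
      rw [if_neg (not_le.2 hx12)]]
    rw [intervalIntegral.integral_const_mul, affine_slice]
  -- explicit polynomial forms on the two halves
  have hgx1 : ∀ x : ℝ, x ≤ 1/2 → g x = (1-2*x)*y₁ + 2*x*y₂ := fun x hx => by
    rw [hgdef]; simp only [if_pos hx]
  have hgx2 : ∀ x : ℝ, 1/2 < x → g x = (2-2*x)*y₂ + (2*x-1)*y₃ := fun x hx => by
    rw [hgdef]; simp only [if_neg (not_le.2 hx)]
  have hlx : ∀ x : ℝ, ℓ x = (1-x)*y₁ + x*y₃ := fun x => by rw [hldef]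
  set P1 : ℝ → ℝ := fun x =>
    (((1-x)*y₁+x*y₃) - ((1-2*x)*y₁+2*x*y₂)) * (α + β * x)
      + γ * (((1-x)*y₁+x*y₃)^2 - ((1-2*x)*y₁+2*x*y₂)^2) / 2 with hP1
  set P2 : ℝ → ℝ := fun x =>
    (((1-x)*y₁+x*y₃) - ((2-2*x)*y₂+(2*x-1)*y₃)) * (α + β * x)
      + γ * (((1-x)*y₁+x*y₃)^2 - ((2-2*x)*y₂+(2*x-1)*y₃)^2) / 2 with hP2
  have hP1c : Continuous P1 := by rw [hP1]; fun_prop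
  have hP2c : Continuous P2 := by rw [hP2]; fun_prop
  have hq1' : ∀ x : ℝ, x ≤ 1/2 → q x = u x * P1 x := by
    intro x hx
    rw [hq1 x hx, hgx1 x hx, hlx, hP1]
  have hq2' : ∀ x : ℝ, 1/2 < x → q x = u (x - 1/2) * P2 x := by
    intro x hx
    rw [hq2 x hx, hgx2 x hx, hlx, hP2]
  clear_value P1 P2
  -- integrability of q on the two halves
  have base1 : IntervalIntegrable (fun x => u x * P1 x) volume 0 (1/2) :=
    hu_int.mul_continuousOn hP1c.continuousOn
  have Iq1 : IntervalIntegrable q volume 0 (1/2) := by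
    constructor
    · exact (base1.1).congr_fun (fun x hx => (hq1' x hx.2).symm) measurableSet_Ioc
    · have he : Set.Ioc (1/2:ℝ) 0 = ∅ := Set.Ioc_eq_empty (by norm_num)
      rw [IntegrableOn, he]
      exact integrableOn_empty
  have hcomp : IntervalIntegrable (fun x => u (x - 1/2)) volume (1/2) 1 := by
    have hc := hu_int.comp_sub_right (1/2)
    have e1 : (0:ℝ) + 1/2 = 1/2 := by norm_num
    have e2 : (1/2:ℝ) + 1/2 = 1 := by norm_num
    rwa [e1, e2] at hc
  have base2 : IntervalIntegrable (fun x => u (x - 1/2) * P2 x) volume (1/2) 1 :=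
    hcomp.mul_continuousOn hP2c.continuousOn
  have Iq2 : IntervalIntegrable q volume (1/2) 1 := by
    constructor
    · exact (base2.1).congr_fun (fun x hx => (hq2' x hx.1).symm) measurableSet_Ioc
    · have he : Set.Ioc (1:ℝ) (1/2) = ∅ := Set.Ioc_eq_empty (by norm_num)
      rw [IntegrableOn, he]
      exact integrableOn_empty
  -- the two halves integrate to zero
  have piece1 : (∫ x in (0:ℝ)..(1/2), q x) = 0 := by
    have e : Set.EqOn q (fun x => u x * P1 x) (uIcc (0:ℝ) (1/2)) := by
      intro x hx
      rw [uIcc_of_le (by norm_num : (0:ℝ) ≤ 1/2)] at hx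
      exact hq1' x hx.2
    rw [intervalIntegral.integral_congr e, hP1]
    simp only
    have e2 : ∀ x : ℝ, u x *
        ((((1-x)*y₁+x*y₃) - ((1-2*x)*y₁+2*x*y₂)) * (α + β * x)
          + γ * (((1-x)*y₁+x*y₃)^2 - ((1-2*x)*y₁+2*x*y₂)^2) / 2)
        = u x * ((0:ℝ)
          + (y₃*α - 2*y₂*α + y₁*α + y₁*y₃*γ - 2*y₁*y₂*γ + y₁^2*γ) * x
          + (y₃*β + y₃^2*γ/2 - 2*y₂*β - 2*y₂^2*γ + y₁*β - y₁*y₃*γ + 4*y₁*y₂*γ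
              - (3/2)*y₁^2*γ) * x^2) := fun x => by ring
    simp only [e2]
    exact ortho_quad u hu_int h0 h1 h2 _ _ _
  have piece2 : (∫ x in (1/2:ℝ)..1, q x) = 0 := by
    have e : ∀ᵐ x ∂(volume : Measure ℝ), x ∈ Set.uIoc (1/2:ℝ) 1 →
        q x = u (x - 1/2) * P2 x := by
      refine MeasureTheory.ae_of_all _ (fun x hx => ?_)
      rw [Set.uIoc_of_le (by norm_num : (1/2:ℝ) ≤ 1)] at hx
      exact hq2' x hx.1
    rw [intervalIntegral.integral_congr_ae e]
    set G : ℝ → ℝ := fun t => u t *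
      ((y₃*β/4 + y₃*α/2 + y₃^2*γ/8 - y₂*β/2 - y₂*α - y₂^2*γ/2 + y₁*β/4 + y₁*α/2
          + y₁*y₃*γ/4 + y₁^2*γ/8)
        + (-(y₃*α) + y₃^2*γ/2 + 2*y₂*α - 2*y₂*y₃*γ + 2*y₂^2*γ - y₁*α - y₁^2*γ/2) * t
        + (-(y₃*β) - (3/2)*y₃^2*γ + 2*y₂*β + 4*y₂*y₃*γ - 2*y₂^2*γ - y₁*β - y₁*y₃*γ
            + y₁^2*γ/2) * t^2) with hGdef
    have e2' : Set.EqOn (fun x => u (x - 1/2) * P2 x) (fun x => G (x - 1/2))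
        (uIcc (1/2:ℝ) 1) := by
      intro x _
      simp only [hGdef, hP2]
      ring
    rw [intervalIntegral.integral_congr e2',
      intervalIntegral.integral_comp_sub_right G (1/2)]
    have e3 : (1/2:ℝ) - 1/2 = 0 := by norm_num
    have e4 : (1:ℝ) - 1/2 = 1/2 := by norm_num
    rw [e3, e4]
    simp only [hGdef]
    exact ortho_quad u hu_int h0 h1 h2 _ _ _
  have split : (∫ x in (0:ℝ)..1, q x) = 0 := by
    rw [← intervalIntegral.integral_add_adjacent_intervals Iq1 Iq2, piece1, piece2]
    norm_num
  calc ∫ p in T, h p = ∫ x : ℝ, ∫ y : ℝ, T.indicator h (x, y) := step1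
    _ = ∫ x : ℝ, (Icc (0:ℝ) 1).indicator (fun x => ∫ y in uIcc (g x) (ℓ x), h (x, y)) x := by
        simp only [slice]
    _ = σ * ∫ x in (0:ℝ)..1, q x := step2
    _ = 0 := by rw [split, mul_zero]
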